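/- Let f : ℝⁿ → (-∞, +∞] be proper lsc convex, x₀* ∈ dom ∂f*, x₀ ∈ ∂f*(x₀*). Then the tangent cone T_{∂f*(x₀*)}(x₀) is contained in the graphical derivative D∂f*(x₀*, x₀)(0); moreover, if ∂f is metrically subregular at (x₀, x₀*), then equality holds. -/

import Mathlib

open Set EMetric Filter
open scoped InnerProductSpace ENNReal NNReal Topology

variable {n : ℕ}

local notation "E" => EuclideanSpace ℝ (Fin n)

/-- Separation lemma: separating a point below the epigraph. -/
lemma aux_sep {f : E → EReal}
    (hproper_bot : ∀ x, ⊥ < f x)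
    (hconvex : ∀ x y, ∀ a b : ℝ, 0 ≤ a → 0 ≤ b → a + b = 1 →
      f (a • x + b • y) ≤ (a : EReal) * f x + (b : EReal) * f y)
    (hlsc : LowerSemicontinuous f)
    (x₁ : E) (r₁ : ℝ) (hx₁ : f x₁ ≤ (r₁ : EReal))
    (u : E) (α : ℝ) (hα : (α : EReal) < f u) :
    ∃ (w : E) (s c : ℝ), s ≤ 0 ∧
      (∀ x : E, ∀ r : ℝ, f x ≤ (r : EReal) → ⟪w, x⟫_ℝ + r * s < c) ∧
      c < ⟪w, u⟫_ℝ + α * s := by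
  set S : Set (E × ℝ) := {p | f p.1 ≤ (p.2 : EReal)} with hS
  have hSconv : Convex ℝ S := by
    intro p hp q hq a b ha hb hab
    have hp1 : f p.1 ≤ (p.2 : EReal) := hp
    have hq1 : f q.1 ≤ (q.2 : EReal) := hq
    have hpt : f p.1 ≠ ⊤ := (hp1.trans_lt (EReal.coe_lt_top _)).ne
    have hqt : f q.1 ≠ ⊤ := (hq1.trans_lt (EReal.coe_lt_top _)).ne
    have hpb : f p.1 ≠ ⊥ := (hproper_bot _).ne'
    have hqb : f q.1 ≠ ⊥ := (hproper_bot _).ne'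
    set rp := (f p.1).toReal with hrp
    set rq := (f q.1).toReal with hrq
    have hfp : f p.1 = (rp : EReal) := (EReal.coe_toReal hpt hpb).symm
    have hfq : f q.1 = (rq : EReal) := (EReal.coe_toReal hqt hqb).symm
    have hrp2 : rp ≤ p.2 := by rwa [hfp, EReal.coe_le_coe_iff] at hp1
    have hrq2 : rq ≤ q.2 := by rwa [hfq, EReal.coe_le_coe_iff] at hq1
    show f ((a • p + b • q).1) ≤ (((a • p + b • q).2 : ℝ) : EReal)
    have h2 : (a • p + b • q).2 = a * p.2 + b * q.2 := rfl
    have h1 : (a • p + b • q).1 = a • p.1 + b • q.1 := rfl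
    rw [h1, h2]
    calc f (a • p.1 + b • q.1) ≤ (a : EReal) * f p.1 + (b : EReal) * f q.1 :=
          hconvex _ _ a b ha hb hab
      _ = ((a * rp + b * rq : ℝ) : EReal) := by
          rw [hfp, hfq, ← EReal.coe_mul, ← EReal.coe_mul, ← EReal.coe_add]
      _ ≤ ((a * p.2 + b * q.2 : ℝ) : EReal) := by
          rw [EReal.coe_le_coe_iff]
          exact add_le_add (mul_le_mul_of_nonneg_left hrp2 ha)
            (mul_le_mul_of_nonneg_left hrq2 hb)
  have hSclosed : IsClosed S := by
    rw [← isOpen_compl_iff, isOpen_iff_mem_nhds]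
    intro p hp
    have hp' : (p.2 : EReal) < f p.1 := not_le.1 hp
    obtain ⟨r, hr1, hr2⟩ := EReal.exists_between_coe_real hp'
    have h1 : ∀ᶠ q : E × ℝ in 𝓝 p, (r : EReal) < f q.1 :=
      (continuous_fst.tendsto p).eventually (hlsc p.1 (r : EReal) hr2)
    have hpr : p.2 < r := by exact_mod_cast hr1
    have h2 : ∀ᶠ q : E × ℝ in 𝓝 p, q.2 < r :=
      (continuous_snd.tendsto p).eventually (eventually_lt_nhds hpr)
    filter_upwards [h1, h2] with q hq1 hq2
    exact not_le.2 ((EReal.coe_lt_coe_iff.2 hq2).trans hq1)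
  have hu : (u, α) ∉ S := not_le.2 hα
  obtain ⟨L, c, hL, hc⟩ := geometric_hahn_banach_closed_point hSconv hSclosed hu
  set w : E := (InnerProductSpace.toDual ℝ E).symm
    (L.comp (ContinuousLinearMap.inl ℝ E ℝ)) with hwdef
  set s : ℝ := L (0, 1) with hsdef
  have hw : ∀ (x : E) (t : ℝ), L (x, t) = ⟪w, x⟫_ℝ + t * s := by
    intro x t
    have hsplit : (x, t) = (x, (0 : ℝ)) + t • ((0 : E), (1 : ℝ)) := by
      simp [Prod.ext_iff]
    rw [hsplit, map_add, map_smul]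
    have : ⟪w, x⟫_ℝ = L (x, 0) := by
      rw [hwdef, InnerProductSpace.toDual_symm_apply]
      rfl
    rw [this, smul_eq_mul, hsdef]
  have hs : s ≤ 0 := by
    by_contra hspos
    push_neg at hspos
    set m : ℝ := max 0 ((c - ⟪w, x₁⟫_ℝ - r₁ * s) / s) with hm
    have hmem : (x₁, r₁ + m) ∈ S := by
      show f x₁ ≤ ((r₁ + m : ℝ) : EReal)
      exact hx₁.trans (EReal.coe_le_coe_iff.2 (by linarith [le_max_left 0 ((c - ⟪w, x₁⟫_ℝ - r₁ * s) / s)]))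
    have hlt := hL _ hmem
    rw [hw] at hlt
    have hdiv : (c - ⟪w, x₁⟫_ℝ - r₁ * s) / s ≤ m := le_max_right _ _
    have h2 : c - ⟪w, x₁⟫_ℝ - r₁ * s ≤ m * s := (div_le_iff₀ hspos).mp hdiv
    nlinarith
  refine ⟨w, s, c, hs, ?_, ?_⟩
  · intro x r hxr
    have := hL (x, r) hxr
    rwa [hw] at this
  · have := hc
    rwa [hw] at this

/-- From a separating hyperplane with negative vertical slope, a bound on the conjugate. -/
lemma aux_conj_bound {f : E → EReal}
    (hproper_bot : ∀ x, ⊥ < f x)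
    {fconj : E → EReal}
    (hfconj : ∀ v, fconj v = ⨆ x, ((⟪v, x⟫_ℝ : EReal) - f x))
    {w : E} {s c : ℝ} (hs : s < 0)
    (hb : ∀ x : E, ∀ r : ℝ, f x ≤ (r : EReal) → ⟪w, x⟫_ℝ + r * s < c) :
    fconj ((-s)⁻¹ • w) ≤ ((c / (-s) : ℝ) : EReal) := by
  rw [hfconj]
  refine iSup_le fun x => ?_
  rcases eq_or_ne (f x) ⊤ with hx | hx
  · rw [hx]
    rw [sub_eq_add_neg, EReal.neg_top, EReal.add_bot]
    exact bot_le
  · have hxb : f x ≠ ⊥ := (hproper_bot x).ne'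
    set r := (f x).toReal with hr
    have hfx : f x = (r : EReal) := (EReal.coe_toReal hx hxb).symm
    have hb' := hb x r hfx.le
    rw [hfx, ← EReal.coe_sub, EReal.coe_le_coe_iff]
    have hinner : ⟪(-s)⁻¹ • w, x⟫_ℝ = (-s)⁻¹ * ⟪w, x⟫_ℝ := real_inner_smul_left _ _ _
    rw [hinner]
    have h0 : (0 : ℝ) < -s := neg_pos.2 hs
    rw [div_eq_inv_mul]
    have h2 := mul_le_mul_of_nonneg_left hb'.le (inv_nonneg.2 h0.le)
    rw [mul_add] at h2
    have h3 : (-s)⁻¹ * (r * s) = -r := by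
      field_simp [hs.ne]
    linarith

/-- The conjugate is somewhere finite. -/
lemma aux_conj_ne_top {f : E → EReal}
    (hproper_bot : ∀ x, ⊥ < f x) (hproper_top : ∃ x, f x < ⊤)
    (hconvex : ∀ x y, ∀ a b : ℝ, 0 ≤ a → 0 ≤ b → a + b = 1 →
      f (a • x + b • y) ≤ (a : EReal) * f x + (b : EReal) * f y)
    (hlsc : LowerSemicontinuous f)
    {fconj : E → EReal}
    (hfconj : ∀ v, fconj v = ⨆ x, ((⟪v, x⟫_ℝ : EReal) - f x)) :
    ∃ (w₀ : E) (β₀ : ℝ), fconj w₀ ≤ (β₀ : EReal) := by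
  obtain ⟨x₁, hx₁⟩ := hproper_top
  have hx₁b : f x₁ ≠ ⊥ := (hproper_bot x₁).ne'
  set r₁ := (f x₁).toReal with hr₁
  have hfx₁ : f x₁ = (r₁ : EReal) := (EReal.coe_toReal hx₁.ne hx₁b).symm
  have hα : ((r₁ - 1 : ℝ) : EReal) < f x₁ := by
    rw [hfx₁, EReal.coe_lt_coe_iff]; linarith
  obtain ⟨w, s, c, hs, hb, hc⟩ := aux_sep hproper_bot hconvex hlsc x₁ r₁ hfx₁.le x₁ (r₁ - 1) hα
  have hs' : s < 0 := by
    rcases lt_or_eq_of_le hs with h | h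
    · exact h
    · exfalso
      have h1 := hb x₁ r₁ hfx₁.le
      rw [h] at h1 hc
      simp only [mul_zero, add_zero] at h1 hc
      linarith
  exact ⟨(-s)⁻¹ • w, c / (-s), aux_conj_bound hproper_bot hfconj hs' hb⟩

/-- Fenchel–Moreau inequality in pointwise form. -/
lemma aux_FM {f : E → EReal}
    (hproper_bot : ∀ x, ⊥ < f x) (hproper_top : ∃ x, f x < ⊤)
    (hconvex : ∀ x y, ∀ a b : ℝ, 0 ≤ a → 0 ≤ b → a + b = 1 →
      f (a • x + b • y) ≤ (a : EReal) * f x + (b : EReal) * f y)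
    (hlsc : LowerSemicontinuous f)
    {fconj : E → EReal}
    (hfconj : ∀ v, fconj v = ⨆ x, ((⟪v, x⟫_ℝ : EReal) - f x))
    (u : E) (α : ℝ) (hα : (α : EReal) < f u) :
    ∃ w : E, fconj w + (α : EReal) < ((⟪w, u⟫_ℝ : ℝ) : EReal) := by
  obtain ⟨x₁, hx₁⟩ := hproper_top
  set r₁ := (f x₁).toReal with hr₁
  have hfx₁ : f x₁ = (r₁ : EReal) := (EReal.coe_toReal hx₁.ne (hproper_bot x₁).ne').symm
  obtain ⟨w₀, β₀, hw₀⟩ := aux_conj_ne_top hproper_bot ⟨x₁, hx₁⟩ hconvex hlsc hfconj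
  obtain ⟨w, s, c, hs, hb, hc⟩ := aux_sep hproper_bot hconvex hlsc x₁ r₁ hfx₁.le u α hα
  rcases lt_or_eq_of_le hs with hs' | hs'
  · -- s < 0 : the separating hyperplane is non-vertical
    refine ⟨(-s)⁻¹ • w, ?_⟩
    have hbound := aux_conj_bound hproper_bot hfconj hs' hb
    have h0 : (0 : ℝ) < -s := neg_pos.2 hs'
    have hinner : ⟪(-s)⁻¹ • w, u⟫_ℝ = (-s)⁻¹ * ⟪w, u⟫_ℝ := real_inner_smul_left _ _ _
    have hreal : c / (-s) + α < ⟪(-s)⁻¹ • w, u⟫_ℝ := by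
      rw [hinner, div_eq_inv_mul]
      have h2 := mul_lt_mul_of_pos_left hc (inv_pos.2 h0)
      rw [mul_add] at h2
      have h3 : (-s)⁻¹ * (α * s) = -α := by
        field_simp [hs'.ne]
      linarith
    calc fconj ((-s)⁻¹ • w) + (α : EReal) ≤ ((c / (-s) : ℝ) : EReal) + (α : EReal) :=
          add_le_add_left hbound _
      _ = ((c / (-s) + α : ℝ) : EReal) := (EReal.coe_add _ _).symm
      _ < _ := EReal.coe_lt_coe_iff.2 hreal
  · -- s = 0 : vertical separating hyperplane; tilt it using w₀
    subst hs'
    simp only [mul_zero, add_zero] at hb hc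
    have hD : 0 < ⟪w, u⟫_ℝ - c := by linarith
    set lam : ℝ := max 0 ((β₀ + α - ⟪w₀, u⟫_ℝ) / (⟪w, u⟫_ℝ - c) + 1) with hlam
    have hlam0 : 0 ≤ lam := le_max_left _ _
    refine ⟨w₀ + lam • w, ?_⟩
    have hbound : fconj (w₀ + lam • w) ≤ ((β₀ + lam * c : ℝ) : EReal) := by
      rw [hfconj]
      refine iSup_le fun x => ?_
      rcases eq_or_ne (f x) ⊤ with hx | hx
      · rw [hx, sub_eq_add_neg, EReal.neg_top, EReal.add_bot]; exact bot_le
      · have hxb : f x ≠ ⊥ := (hproper_bot x).ne'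
        set r := (f x).toReal with hr
        have hfx : f x = (r : EReal) := (EReal.coe_toReal hx hxb).symm
        have hyoung : ((⟪w₀, x⟫_ℝ - r : ℝ) : EReal) ≤ fconj w₀ := by
          rw [hfconj w₀]
          have := le_iSup (fun x => ((⟪w₀, x⟫_ℝ : EReal) - f x)) x
          rwa [hfx, ← EReal.coe_sub] at this
        have h1 : ⟪w₀, x⟫_ℝ - r ≤ β₀ :=
          EReal.coe_le_coe_iff.1 (hyoung.trans hw₀)
        have h2 : ⟪w, x⟫_ℝ < c := hb x r hfx.le
        rw [hfx, ← EReal.coe_sub, EReal.coe_le_coe_iff]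
        have hi : ⟪w₀ + lam • w, x⟫_ℝ = ⟪w₀, x⟫_ℝ + lam * ⟪w, x⟫_ℝ := by
          rw [inner_add_left, real_inner_smul_left]
        rw [hi]
        nlinarith [mul_le_mul_of_nonneg_left h2.le hlam0]
    have hreal : β₀ + lam * c + α < ⟪w₀ + lam • w, u⟫_ℝ := by
      have hi : ⟪w₀ + lam • w, u⟫_ℝ = ⟪w₀, u⟫_ℝ + lam * ⟪w, u⟫_ℝ := by
        rw [inner_add_left, real_inner_smul_left]
      rw [hi]
      have hq : (β₀ + α - ⟪w₀, u⟫_ℝ) / (⟪w, u⟫_ℝ - c) + 1 ≤ lam := le_max_right _ _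
      have hqq : (β₀ + α - ⟪w₀, u⟫_ℝ) / (⟪w, u⟫_ℝ - c) * (⟪w, u⟫_ℝ - c)
          = β₀ + α - ⟪w₀, u⟫_ℝ := div_mul_cancel₀ _ hD.ne'
      nlinarith [mul_le_mul_of_nonneg_right hq (le_of_lt hD)]
    calc fconj (w₀ + lam • w) + (α : EReal) ≤ ((β₀ + lam * c : ℝ) : EReal) + (α : EReal) :=
          add_le_add_left hbound _
      _ = ((β₀ + lam * c + α : ℝ) : EReal) := (EReal.coe_add _ _).symm
      _ < _ := EReal.coe_lt_coe_iff.2 hreal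

/-- Easy direction: `v ∈ ∂f(u)` implies `u ∈ ∂f*(v)`. -/
lemma aux_easy {f : E → EReal}
    (hproper_bot : ∀ x, ⊥ < f x) (hproper_top : ∃ x, f x < ⊤)
    {fconj : E → EReal}
    (hfconj : ∀ v, fconj v = ⨆ x, ((⟪v, x⟫_ℝ : EReal) - f x))
    (v u : E) (h : ∀ y, f u + ((⟪v, y - u⟫_ℝ : ℝ) : EReal) ≤ f y) :
    ∀ w, fconj v + ((⟪u, w - v⟫_ℝ : ℝ) : EReal) ≤ fconj w := by
  obtain ⟨x₁, hx₁⟩ := hproper_top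
  have hut : f u ≠ ⊤ := by
    intro htop
    have := h x₁
    rw [htop, EReal.top_add_coe] at this
    exact absurd (this.trans_lt hx₁) (lt_irrefl _)
  set r := (f u).toReal with hrdef
  have hfu : f u = (r : EReal) := (EReal.coe_toReal hut (hproper_bot u).ne').symm
  have young : ∀ w y : E, ∀ ry : ℝ, f y = (ry : EReal) →
      ((⟪w, y⟫_ℝ - ry : ℝ) : EReal) ≤ fconj w := by
    intro w y ry hy
    rw [hfconj w]
    have := le_iSup (fun x => ((⟪w, x⟫_ℝ : EReal) - f x)) y
    rwa [hy, ← EReal.coe_sub] at this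
  have hconjv : fconj v = ((⟪v, u⟫_ℝ - r : ℝ) : EReal) := by
    refine le_antisymm ?_ (young v u r hfu)
    rw [hfconj v]
    refine iSup_le fun y => ?_
    rcases eq_or_ne (f y) ⊤ with hy | hy
    · rw [hy, sub_eq_add_neg, EReal.neg_top, EReal.add_bot]; exact bot_le
    · set ry := (f y).toReal with hrydef
      have hfy : f y = (ry : EReal) := (EReal.coe_toReal hy (hproper_bot y).ne').symm
      have := h y
      rw [hfu, hfy, ← EReal.coe_add, EReal.coe_le_coe_iff] at this
      rw [hfy, ← EReal.coe_sub, EReal.coe_le_coe_iff]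
      have hsub : ⟪v, y - u⟫_ℝ = ⟪v, y⟫_ℝ - ⟪v, u⟫_ℝ := inner_sub_right _ _ _
      rw [hsub] at this
      linarith
  intro w
  rw [hconjv, ← EReal.coe_add]
  have key : (⟪v, u⟫_ℝ - r) + ⟪u, w - v⟫_ℝ = ⟪w, u⟫_ℝ - r := by
    rw [inner_sub_right, real_inner_comm u w, real_inner_comm u v]
    ring
  rw [key]
  exact young w u r hfu

/-- Hard direction: `u ∈ ∂f*(v)` implies `v ∈ ∂f(u)`; uses Fenchel–Moreau. -/
lemma aux_hard {f : E → EReal}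
    (hproper_bot : ∀ x, ⊥ < f x) (hproper_top : ∃ x, f x < ⊤)
    (hconvex : ∀ x y, ∀ a b : ℝ, 0 ≤ a → 0 ≤ b → a + b = 1 →
      f (a • x + b • y) ≤ (a : EReal) * f x + (b : EReal) * f y)
    (hlsc : LowerSemicontinuous f)
    {fconj : E → EReal}
    (hfconj : ∀ v, fconj v = ⨆ x, ((⟪v, x⟫_ℝ : EReal) - f x))
    (v u : E) (hu : ∀ w, fconj v + ((⟪u, w - v⟫_ℝ : ℝ) : EReal) ≤ fconj w) :
    ∀ y, f u + ((⟪v, y - u⟫_ℝ : ℝ) : EReal) ≤ f y := by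
  obtain ⟨x₁, hx₁⟩ := hproper_top
  set r₁ := (f x₁).toReal with hr₁def
  have hfx₁ : f x₁ = (r₁ : EReal) := (EReal.coe_toReal hx₁.ne (hproper_bot x₁).ne').symm
  have young : ∀ w y : E, ∀ ry : ℝ, f y = (ry : EReal) →
      ((⟪w, y⟫_ℝ - ry : ℝ) : EReal) ≤ fconj w := by
    intro w y ry hy
    rw [hfconj w]
    have := le_iSup (fun x => ((⟪w, x⟫_ℝ : EReal) - f x)) y
    rwa [hy, ← EReal.coe_sub] at this
  have hconj_ne_bot : ∀ w, fconj w ≠ ⊥ := fun w =>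
    ((EReal.bot_lt_coe _).trans_le (young w x₁ r₁ hfx₁)).ne'
  obtain ⟨w₀, β₀, hw₀⟩ := aux_conj_ne_top hproper_bot ⟨x₁, hx₁⟩ hconvex hlsc hfconj
  have hconjv_ne_top : fconj v ≠ ⊤ := by
    intro htop
    have := hu w₀
    rw [htop, EReal.top_add_coe] at this
    exact absurd (this.trans hw₀) (by simp)
  set s := (fconj v).toReal with hsdef
  have hfcv : fconj v = (s : EReal) := (EReal.coe_toReal hconjv_ne_top (hconj_ne_bot v)).symm
  -- main claim : f u ≤ ⟪v,u⟫ - s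
  have hmain : f u ≤ ((⟪v, u⟫_ℝ - s : ℝ) : EReal) := by
    by_contra hcon
    push_neg at hcon
    obtain ⟨w, hw⟩ := aux_FM hproper_bot ⟨x₁, hx₁⟩ hconvex hlsc hfconj u (⟪v, u⟫_ℝ - s) hcon
    have hwt : fconj w ≠ ⊤ := by
      intro htop
      rw [htop, EReal.top_add_coe] at hw
      exact absurd hw (by simp)
    set t := (fconj w).toReal with htdef
    have hfcw : fconj w = (t : EReal) := (EReal.coe_toReal hwt (hconj_ne_bot w)).symm
    rw [hfcw, ← EReal.coe_add, EReal.coe_lt_coe_iff] at hw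
    have h2 := hu w
    rw [hfcv, hfcw, ← EReal.coe_add, EReal.coe_le_coe_iff] at h2
    have hsub : ⟪u, w - v⟫_ℝ = ⟪u, w⟫_ℝ - ⟪u, v⟫_ℝ := inner_sub_right _ _ _
    rw [hsub] at h2
    linarith [hw, h2, real_inner_comm u w, real_inner_comm u v]
  intro y
  rcases eq_or_ne (f y) ⊤ with hy | hy
  · rw [hy]; exact le_top
  · set ry := (f y).toReal with hrydef
    have hfy : f y = (ry : EReal) := (EReal.coe_toReal hy (hproper_bot y).ne').symm
    have hylow : ⟪v, y⟫_ℝ - ry ≤ s := by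
      have := young v y ry hfy
      rw [hfcv, EReal.coe_le_coe_iff] at this
      exact this
    calc f u + ((⟪v, y - u⟫_ℝ : ℝ) : EReal)
        ≤ ((⟪v, u⟫_ℝ - s : ℝ) : EReal) + ((⟪v, y - u⟫_ℝ : ℝ) : EReal) :=
          add_le_add_left hmain _
      _ = ((⟪v, u⟫_ℝ - s + ⟪v, y - u⟫_ℝ : ℝ) : EReal) := (EReal.coe_add _ _).symm
      _ ≤ (ry : EReal) := by
          rw [EReal.coe_le_coe_iff, inner_sub_right]
          linarith
      _ = f y := hfy.symm

/-- For proper lsc convex `f` and `x₀ ∈ ∂f*(x₀*)`, the tangent cone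
`T_{∂f*(x₀*)}(x₀)` is contained in the graphical derivative `D∂f*(x₀*, x₀)(0)`, with
equality if `∂f` is metrically subregular at `(x₀, x₀*)`. -/
theorem tangent_cone_subset_graphical_derivative
    (n : ℕ) (f : EuclideanSpace ℝ (Fin n) → EReal)
    (hproper_bot : ∀ x, ⊥ < f x) (hproper_top : ∃ x, f x < ⊤)
    (hconvex : ∀ x y, ∀ a b : ℝ, 0 ≤ a → 0 ≤ b → a + b = 1 →
      f (a • x + b • y) ≤ (a : EReal) * f x + (b : EReal) * f y)
    (hlsc : LowerSemicontinuous f)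
    (fconj : EuclideanSpace ℝ (Fin n) → EReal)
    (hfconj : ∀ v, fconj v = ⨆ x, ((⟪v, x⟫_ℝ : EReal) - f x))
    (subf : EuclideanSpace ℝ (Fin n) → Set (EuclideanSpace ℝ (Fin n)))
    (hsubf : ∀ x, subf x = {s | ∀ y, f x + ((⟪s, y - x⟫_ℝ : ℝ) : EReal) ≤ f y})
    (subfconj : EuclideanSpace ℝ (Fin n) → Set (EuclideanSpace ℝ (Fin n)))
    (hsubfconj : ∀ v, subfconj v = {x | ∀ w, fconj v + ((⟪x, w - v⟫_ℝ : ℝ) : EReal) ≤ fconj w})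
    (xs x₀ : EuclideanSpace ℝ (Fin n)) (hx₀ : x₀ ∈ subfconj xs) :
    (tangentConeAt ℝ (subfconj xs) x₀ ⊆
        {v | ((0 : EuclideanSpace ℝ (Fin n)), v) ∈
          tangentConeAt ℝ {p : EuclideanSpace ℝ (Fin n) × EuclideanSpace ℝ (Fin n) |
            p.2 ∈ subfconj p.1} (xs, x₀)}) ∧
      ((∃ κ : ℝ≥0, ∃ ε > (0 : ℝ), ∀ x ∈ Metric.ball x₀ ε,
          infEdist x {u | xs ∈ subf u} ≤ (κ : ℝ≥0∞) * infEdist xs (subf x)) →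
        tangentConeAt ℝ (subfconj xs) x₀ =
          {v | ((0 : EuclideanSpace ℝ (Fin n)), v) ∈
            tangentConeAt ℝ {p : EuclideanSpace ℝ (Fin n) × EuclideanSpace ℝ (Fin n) |
              p.2 ∈ subfconj p.1} (xs, x₀)}) := by
  have part1 : tangentConeAt ℝ (subfconj xs) x₀ ⊆
      {v | ((0 : EuclideanSpace ℝ (Fin n)), v) ∈
        tangentConeAt ℝ {p : EuclideanSpace ℝ (Fin n) × EuclideanSpace ℝ (Fin n) | p.2 ∈ subfconj p.1} (xs, x₀)} := by
    intro v hv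
    obtain ⟨c, d, hc, hd, hcd⟩ := mem_tangentConeAt_iff_exists_seq_norm_tendsto_atTop.1 hv
    refine mem_tangentConeAt_iff_exists_seq_norm_tendsto_atTop.2 ⟨c, fun k => ((0 : EuclideanSpace ℝ (Fin n)), d k), hc, ?_, ?_⟩
    · filter_upwards [hd] with k hk
      show ((xs, x₀) + ((0 : EuclideanSpace ℝ (Fin n)), d k)).2 ∈ subfconj ((xs, x₀) + ((0 : EuclideanSpace ℝ (Fin n)), d k)).1
      simpa using hk
    · have h1 : Tendsto (fun k => (c k • (0 : EuclideanSpace ℝ (Fin n)), c k • d k)) atTop (𝓝 ((0 : EuclideanSpace ℝ (Fin n)), v)) := by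
        refine Tendsto.prodMk_nhds ?_ hcd
        simpa using (tendsto_const_nhds : Tendsto (fun _ : ℕ => (0 : EuclideanSpace ℝ (Fin n))) atTop (𝓝 0))
      convert h1 using 2
      rfl
  refine ⟨part1, ?_⟩
  rintro ⟨κ, ε, hε, hcalm⟩
  refine Subset.antisymm part1 ?_
  intro v hv
  obtain ⟨c, d, hc, hd, hcd⟩ := mem_tangentConeAt_iff_exists_seq_norm_tendsto_atTop.1 hv
  set a : ℕ → EuclideanSpace ℝ (Fin n) := fun k => (d k).1 with ha
  set b : ℕ → EuclideanSpace ℝ (Fin n) := fun k => (d k).2 with hb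
  have hcda : Tendsto (fun k => c k • a k) atTop (𝓝 0) := by
    have := (continuous_fst.tendsto ((0 : EuclideanSpace ℝ (Fin n)), v)).comp hcd
    simpa [Function.comp_def] using this
  have hcdb : Tendsto (fun k => c k • b k) atTop (𝓝 v) := by
    have := (continuous_snd.tendsto ((0 : EuclideanSpace ℝ (Fin n)), v)).comp hcd
    simpa [Function.comp_def] using this
  have ha0 : Tendsto a atTop (𝓝 0) := tangentConeAt.lim_zero atTop hc hcda
  have hb0 : Tendsto b atTop (𝓝 0) := tangentConeAt.lim_zero atTop hc hcdb
  -- the two directions of inversion of the subdifferential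
  have hard : ∀ v' u', u' ∈ subfconj v' → v' ∈ subf u' := by
    intro v' u' h
    rw [hsubfconj] at h
    rw [hsubf]
    exact aux_hard hproper_bot hproper_top hconvex hlsc hfconj v' u' h
  have easy : ∀ v' u', v' ∈ subf u' → u' ∈ subfconj v' := by
    intro v' u' h
    rw [hsubf] at h
    rw [hsubfconj]
    exact aux_easy hproper_bot hproper_top hfconj v' u' h
  set A : Set (EuclideanSpace ℝ (Fin n)) := {u | xs ∈ subf u} with hA
  have hx₀A : x₀ ∈ A := hard xs x₀ hx₀
  -- eventually, everything is in place
  have hball : ∀ᶠ k in atTop, x₀ + b k ∈ Metric.ball x₀ ε := by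
    have hnorm : Tendsto (fun k => ‖b k‖) atTop (𝓝 0) := by
      have := hb0.norm
      rwa [norm_zero] at this
    filter_upwards [hnorm.eventually (eventually_lt_nhds hε)] with k hk
    simpa [Metric.mem_ball, dist_eq_norm] using hk
  have hcbig : ∀ᶠ k in atTop, 1 ≤ ‖c k‖ := hc.eventually_ge_atTop 1
  have hgraph : ∀ᶠ k in atTop, x₀ + b k ∈ subfconj (xs + a k) := by
    filter_upwards [hd] with k hk
    exact hk
  set δ : ℕ → ℝ := fun k => ‖c k‖⁻¹ * ((k : ℝ) + 1)⁻¹ with hδ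
  -- key eventual property
  set P : ℕ → Prop := fun k => ∃ y ∈ A,
      edist (x₀ + b k) y < (κ : ℝ≥0∞) * ENNReal.ofReal ‖a k‖ + ENNReal.ofReal (δ k) with hP
  have hPev : ∀ᶠ k in atTop, P k := by
    filter_upwards [hball, hcbig, hgraph] with k hk1 hk2 hk3
    have hδpos : 0 < δ k := by
      have h1 : (0 : ℝ) < ‖c k‖ := lt_of_lt_of_le one_pos hk2
      have h2 : (0 : ℝ) < (k : ℝ) + 1 := by positivity
      positivity
    have hmem : xs + a k ∈ subf (x₀ + b k) := hard _ _ hk3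
    have h1 : infEdist xs (subf (x₀ + b k)) ≤ ENNReal.ofReal ‖a k‖ := by
      have := infEdist_le_edist_of_mem (x := xs) hmem
      rwa [edist_dist, dist_self_add_right] at this
    have h2 : infEdist (x₀ + b k) A ≤ (κ : ℝ≥0∞) * ENNReal.ofReal ‖a k‖ :=
      (hcalm _ hk1).trans (mul_le_mul_right h1 _)
    have h3 : infEdist (x₀ + b k) A <
        (κ : ℝ≥0∞) * ENNReal.ofReal ‖a k‖ + ENNReal.ofReal (δ k) := by
      refine h2.trans_lt ?_
      exact ENNReal.lt_add_right (by finiteness) (ENNReal.ofReal_pos.2 hδpos).ne'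
    exact infEdist_lt_iff.1 h3
  classical
  set y : ℕ → EuclideanSpace ℝ (Fin n) := fun k => if h : P k then h.choose else x₀ with hy
  have hyspec : ∀ k, P k → y k ∈ A ∧
      edist (x₀ + b k) (y k) < (κ : ℝ≥0∞) * ENNReal.ofReal ‖a k‖ + ENNReal.ofReal (δ k) := by
    intro k hk
    simp only [hy, dif_pos hk]
    exact ⟨hk.choose_spec.1, hk.choose_spec.2⟩
  set d' : ℕ → EuclideanSpace ℝ (Fin n) := fun k => y k - x₀ with hd'
  refine mem_tangentConeAt_iff_exists_seq_norm_tendsto_atTop.2 ⟨c, d', hc, ?_, ?_⟩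
  · filter_upwards [hPev] with k hk
    have := (hyspec k hk).1
    have : y k ∈ subfconj xs := easy _ _ this
    simpa [hd'] using this
  · -- c k • d' k → v
    have hdecomp : ∀ k, c k • d' k = c k • b k + c k • (y k - (x₀ + b k)) := by
      intro k
      rw [← smul_add]
      congr 1
      show y k - x₀ = b k + (y k - (x₀ + b k))
      abel
    have herr : Tendsto (fun k => c k • (y k - (x₀ + b k))) atTop (𝓝 0) := by
      refine squeeze_zero_norm'
        (a := fun k => (κ : ℝ) * ‖c k • a k‖ + ((k : ℝ) + 1)⁻¹) ?_ ?_
      · filter_upwards [hPev, hcbig] with k hk hck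
        have hcpos : (0 : ℝ) < ‖c k‖ := lt_of_lt_of_le one_pos hck
        have hδpos : 0 < δ k := by positivity
        have hdist := (hyspec k hk).2
        have hconv : (κ : ℝ≥0∞) * ENNReal.ofReal ‖a k‖ + ENNReal.ofReal (δ k)
            = ENNReal.ofReal ((κ : ℝ) * ‖a k‖ + δ k) := by
          rw [ENNReal.ofReal_add (by positivity) hδpos.le, ENNReal.ofReal_mul (κ.coe_nonneg)]
          simp [ENNReal.ofReal_coe_nnreal]
        rw [hconv, edist_dist, ENNReal.ofReal_lt_ofReal_iff_of_nonneg dist_nonneg] at hdist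
        have hdist' : ‖y k - (x₀ + b k)‖ ≤ (κ : ℝ) * ‖a k‖ + δ k := by
          rw [dist_eq_norm] at hdist
          calc ‖y k - (x₀ + b k)‖ = ‖(x₀ + b k) - y k‖ := (norm_sub_rev _ _)
            _ ≤ _ := hdist.le
        calc ‖c k • (y k - (x₀ + b k))‖ = ‖c k‖ * ‖y k - (x₀ + b k)‖ := norm_smul _ _
          _ ≤ ‖c k‖ * ((κ : ℝ) * ‖a k‖ + δ k) :=
              mul_le_mul_of_nonneg_left hdist' (norm_nonneg _)
          _ = (κ : ℝ) * (‖c k‖ * ‖a k‖) + ‖c k‖ * δ k := by ring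
          _ = (κ : ℝ) * ‖c k • a k‖ + ((k : ℝ) + 1)⁻¹ := by
              have hck' : ‖c k‖ * δ k = ((k : ℝ) + 1)⁻¹ := by
                simp only [hδ]
                rw [← mul_assoc, mul_inv_cancel₀ hcpos.ne', one_mul]
              rw [norm_smul, hck']
      · have h1 : Tendsto (fun k => (κ : ℝ) * ‖c k • a k‖) atTop (𝓝 0) := by
          have := hcda.norm
          simpa using this.const_mul (κ : ℝ)
        have h2 : Tendsto (fun k : ℕ => ((k : ℝ) + 1)⁻¹) atTop (𝓝 0) :=
          tendsto_one_div_add_atTop_nhds_zero_nat.congr (by intro k; simp [one_div])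
        simpa using h1.add h2
    have := hcdb.add herr
    rw [add_zero] at this
    exact this.congr fun k => (hdecomp k).symm
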